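/- If non-negative integers n1 ≥ n2 ≥ 0 and a1 ≥ a2 ≥ a3 ≥ 0 with n1 > 100 satisfy B_{n1} + B_{n2} = 2^{a1} + 2^{a2} + 2^{a3}, then |1 − α^{−n1}·2^{a1}·4√2·(1 + 2^{a2−a1} + 2^{a3−a1})/(1 + α^{n2−n1})| < 0.6 · α^{−n1}, where α = 3 + 2√2. -/

import Mathlib

/-- The balancing numbers: `B 0 = 0`, `B 1 = 1`, `B (n+2) = 6 * B (n+1) - B n`. -/
def balancing : ℕ → ℤ
  | 0 => 0
  | 1 => 1
  | n + 2 => 6 * balancing (n + 1) - balancing n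

lemma balancing_rec (n : ℕ) : balancing (n+2) = 6 * balancing (n+1) - balancing n := rfl

abbrev S := (ℕ × ℕ) × (ℕ × ℕ) × (ℕ × ℕ)

def bstep : S → S := fun s =>
  ((s.1.2, (6 * s.1.2 + (1530 - s.1.1)) % 255),
   (s.2.1.2, (6 * s.2.1.2 + (1536 - s.2.1.1)) % 256),
   (s.2.2.2, (6 * s.2.2.2 + (1542 - s.2.2.1)) % 257))

def binit : S := ((0, 1), (0, 1), (0, 1))

def bit3 : ℕ → S → S
  | 0, s => s
  | n+1, s => bit3 n (bstep s)

lemma bit3_succ' (n : ℕ) (s : S) : bit3 (n+1) s = bstep (bit3 n s) := by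
  induction n generalizing s with
  | zero => rfl
  | succ n ih => show bit3 (n+1) (bstep s) = _; rw [ih (bstep s)]; rfl

lemma bit3_add (a b : ℕ) (s : S) : bit3 (a + b) s = bit3 b (bit3 a s) := by
  induction b with
  | zero => rfl
  | succ b ih => rw [show a + (b+1) = (a+b)+1 from rfl, bit3_succ', ih, ← bit3_succ']

def inT1 (m v b c : ℕ) : Bool := (List.range 16).any fun i => (2^i + 2^b + 2^c) % m == v
def inT2 (m v c : ℕ) : Bool :=
  (List.range 16).any fun i => (List.range 16).any fun j => (2^i + 2^j + 2^c) % m == v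
def inT3 (m v : ℕ) : Bool :=
  (List.range 16).any fun i => (List.range 16).any fun j => (List.range 16).any fun k =>
    (2^i + 2^j + 2^k) % m == v

def bcheck (s : S) : Bool :=
  ((!(s.2.1.1 == 0)) || ((!(inT3 255 s.1.1)) || (!(inT3 257 s.2.2.1)))) &&
  (((List.range 8).all fun c => (!(s.2.1.1 == 2^c % 256)) ||
      ((!(inT2 255 s.1.1 c)) || (!(inT2 257 s.2.2.1 c)))) &&
   ((List.range 8).all fun b => (List.range 8).all fun c =>
      (!(s.2.1.1 == (2^b + 2^c) % 256)) ||
      ((!(inT1 255 s.1.1 b c)) || (!(inT1 257 s.2.2.1 b c)))))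

def bloop : ℕ → S → Bool
  | 0, s => bcheck s
  | n+1, s => bcheck s && bloop n (bstep s)

set_option maxRecDepth 40000 in
set_option maxHeartbeats 4000000 in
lemma bloop_true : bloop 768 binit = true := by decide

set_option maxRecDepth 40000 in
lemma bit3_384 : bit3 384 binit = ((0, 1), (128, 129), (0, 1)) := by decide

set_option maxRecDepth 40000 in
lemma bit3_768 : bit3 384 ((0, 1), (128, 129), (0, 1)) = binit := by decide

lemma bit3_period : bit3 768 binit = binit := by
  rw [show (768 : ℕ) = 384 + 384 from rfl, bit3_add, bit3_384, bit3_768]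

lemma bit3_mod (n : ℕ) : bit3 n binit = bit3 (n % 768) binit := by
  conv_lhs => rw [← Nat.div_add_mod n 768]
  rw [bit3_add]
  congr 1
  induction (n / 768) with
  | zero => rfl
  | succ k ih => rw [show 768 * (k+1) = 768 * k + 768 from by ring, bit3_add, ih, bit3_period]

lemma bloop_spec : ∀ n s, bloop n s = true → ∀ i, i ≤ n → bcheck (bit3 i s) = true := by
  intro n
  induction n with
  | zero => intro s h i hi; interval_cases i; exact h
  | succ n ih =>
    intro s h i hi
    rw [bloop, Bool.and_eq_true] at h
    match i with
    | 0 => exact h.1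
    | j+1 => exact ih (bstep s) h.2 j (by omega)

lemma bcheck_all (i : ℕ) : bcheck (bit3 (i % 768) binit) = true :=
  bloop_spec 768 binit bloop_true _ (le_of_lt (Nat.mod_lt _ (by norm_num)))
-- generic step lemma for one modulus
lemma step_cast {m : ℕ} (hm : 2 ≤ m) (a b : ℕ) (x y : ℤ) (ha : a < m) (hb : b < m)
    (hxa : (a : ZMod m) = (x : ZMod m)) (hyb : (b : ZMod m) = (y : ZMod m)) :
    (((6 * b + (6 * m - a)) % m : ℕ) : ZMod m) = ((6 * y - x : ℤ) : ZMod m) := by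
  have h1 : a ≤ 6 * m := by omega
  rw [ZMod.natCast_mod]
  push_cast [Nat.cast_sub h1]
  rw [hxa, hyb]
  simp [ZMod.natCast_self]
  ring

lemma bit3_spec (n : ℕ) :
    (bit3 n binit).1.1 < 255 ∧ (bit3 n binit).1.2 < 255 ∧
    (bit3 n binit).2.1.1 < 256 ∧ (bit3 n binit).2.1.2 < 256 ∧
    (bit3 n binit).2.2.1 < 257 ∧ (bit3 n binit).2.2.2 < 257 ∧
    ((bit3 n binit).1.1 : ZMod 255) = (balancing n : ZMod 255) ∧
    ((bit3 n binit).1.2 : ZMod 255) = (balancing (n+1) : ZMod 255) ∧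
    ((bit3 n binit).2.1.1 : ZMod 256) = (balancing n : ZMod 256) ∧
    ((bit3 n binit).2.1.2 : ZMod 256) = (balancing (n+1) : ZMod 256) ∧
    ((bit3 n binit).2.2.1 : ZMod 257) = (balancing n : ZMod 257) ∧
    ((bit3 n binit).2.2.2 : ZMod 257) = (balancing (n+1) : ZMod 257) := by
  induction n with
  | zero =>
    refine ⟨by norm_num [bit3, binit], by norm_num [bit3, binit], by norm_num [bit3, binit],
      by norm_num [bit3, binit], by norm_num [bit3, binit], by norm_num [bit3, binit], ?_, ?_, ?_, ?_, ?_, ?_⟩ <;>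
      simp [bit3, binit, balancing]
  | succ n ih =>
    obtain ⟨h1, h2, h3, h4, h5, h6, e1, e2, e3, e4, e5, e6⟩ := ih
    rw [bit3_succ']
    refine ⟨h2, Nat.mod_lt _ (by norm_num), h4, Nat.mod_lt _ (by norm_num),
      h6, Nat.mod_lt _ (by norm_num), e2, ?_, e4, ?_, e6, ?_⟩
    · have := step_cast (m := 255) (by norm_num) _ _ _ _ h1 h2 e1 e2
      rw [balancing_rec]; exact this
    · have := step_cast (m := 256) (by norm_num) _ _ _ _ h3 h4 e3 e4
      rw [balancing_rec]; exact this
    · have := step_cast (m := 257) (by norm_num) _ _ _ _ h5 h6 e5 e6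
      rw [balancing_rec]; exact this
lemma bal_nonneg_mono (n : ℕ) : 0 ≤ balancing n ∧ balancing n ≤ balancing (n+1) := by
  induction n with
  | zero => norm_num [balancing]
  | succ n ih =>
    obtain ⟨h1, h2⟩ := ih
    refine ⟨by linarith, ?_⟩
    rw [balancing_rec]; linarith

lemma bal_ge (n : ℕ) : 5^n ≤ balancing (n+2) := by
  induction n with
  | zero => norm_num [balancing]
  | succ n ih =>
    have h := bal_nonneg_mono (n+1)
    rw [balancing_rec]
    have : (5:ℤ)^(n+1) = 5 * 5^n := by ring
    nlinarith [h.1, h.2]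

lemma nat_eq_of_zmod {m : ℕ} (x y : ℕ) (hx : x < m) (hy : y < m)
    (h : (x : ZMod m) = (y : ZMod m)) : x = y := by
  have := congrArg ZMod.val h
  rwa [ZMod.val_cast_of_lt hx, ZMod.val_cast_of_lt hy] at this

lemma zmod_pow2_256 {x : ℕ} (hx : 8 ≤ x) : (2 : ZMod 256)^x = 0 := by
  obtain ⟨y, rfl⟩ : ∃ y, x = 8 + y := ⟨x - 8, by omega⟩
  rw [pow_add]
  have : (2 : ZMod 256)^8 = 0 := by decide
  rw [this, zero_mul]

lemma zmod_pow2_mod16 {m : ℕ} (h : (2 : ZMod m)^16 = 1) (x : ℕ) :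
    (2 : ZMod m)^x = 2^(x % 16) := by
  conv_lhs => rw [← Nat.div_add_mod x 16, pow_add, pow_mul, h, one_pow, one_mul]

theorem not_three_powers (n a b c : ℕ) (hcb : c ≤ b) (hba : b ≤ a) (hn : 100 < n)
    (h : balancing n = 2^a + 2^b + 2^c) : False := by
  -- a is large
  have ha8 : 8 ≤ a := by
    by_contra hlt
    push_neg at hlt
    obtain ⟨m, rfl⟩ : ∃ m, n = m + 2 := ⟨n - 2, by omega⟩
    have h1 : (5:ℤ)^99 ≤ balancing (m+2) := by
      calc (5:ℤ)^99 ≤ 5^m := pow_le_pow_right₀ (by norm_num) (by omega)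
      _ ≤ _ := bal_ge m
    have h2 : (2:ℤ)^a + 2^b + 2^c ≤ 3 * 2^7 := by
      have la : (2:ℤ)^a ≤ 2^7 := pow_le_pow_right₀ (by norm_num) (by omega)
      have lb : (2:ℤ)^b ≤ 2^7 := pow_le_pow_right₀ (by norm_num) (by omega)
      have lc : (2:ℤ)^c ≤ 2^7 := pow_le_pow_right₀ (by norm_num) (by omega)
      linarith
    rw [h] at h1
    have : (5:ℤ)^99 ≤ 3 * 2^7 := le_trans h1 h2
    norm_num at this
  -- data from the finite check
  have hch := bcheck_all n
  have hsp := bit3_spec n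
  rw [bit3_mod n] at hsp
  set s := bit3 (n % 768) binit with hs
  obtain ⟨l1, -, l3, -, l5, -, e1, -, e3, -, e5, -⟩ := hsp
  simp only [bcheck, Bool.and_eq_true, Bool.or_eq_true, Bool.not_eq_true',
    beq_iff_eq, beq_eq_false_iff_ne, List.all_eq_true, List.mem_range] at hch
  obtain ⟨hc1, hc2, hc3⟩ := hch
  have h255 : (2 : ZMod 255)^16 = 1 := by decide
  have h257 : (2 : ZMod 257)^16 = 1 := by decide
  -- casts of balancing n
  have hcast255 : ((balancing n : ℤ) : ZMod 255) = 2^(a % 16) + 2^(b % 16) + 2^(c % 16) := by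
    rw [h]
    push_cast
    rw [zmod_pow2_mod16 h255 a, zmod_pow2_mod16 h255 b, zmod_pow2_mod16 h255 c]
  have hcast257 : ((balancing n : ℤ) : ZMod 257) = 2^(a % 16) + 2^(b % 16) + 2^(c % 16) := by
    rw [h]
    push_cast
    rw [zmod_pow2_mod16 h257 a, zmod_pow2_mod16 h257 b, zmod_pow2_mod16 h257 c]
  rcases le_or_gt 8 c with hc | hc
  · -- all exponents ≥ 8 : p = 0, inT3 both
    have hb8 : 8 ≤ b := le_trans hc hcb
    have hp0 : s.2.1.1 = 0 := by
      apply nat_eq_of_zmod _ _ l3 (by norm_num)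
      rw [e3, h]
      push_cast
      rw [zmod_pow2_256 ha8, zmod_pow2_256 hb8, zmod_pow2_256 hc]
      norm_num
    have ht1 : inT3 255 s.1.1 = true := by
      rw [inT3]
      simp only [List.any_eq_true, List.mem_range, beq_iff_eq]
      exact ⟨a % 16, Nat.mod_lt _ (by norm_num), b % 16, Nat.mod_lt _ (by norm_num),
        c % 16, Nat.mod_lt _ (by norm_num), by
          apply nat_eq_of_zmod _ _ (Nat.mod_lt _ (by norm_num)) l1
          rw [ZMod.natCast_mod, e1, hcast255]
          push_cast
          try ring⟩
    have ht2 : inT3 257 s.2.2.1 = true := by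
      rw [inT3]
      simp only [List.any_eq_true, List.mem_range, beq_iff_eq]
      exact ⟨a % 16, Nat.mod_lt _ (by norm_num), b % 16, Nat.mod_lt _ (by norm_num),
        c % 16, Nat.mod_lt _ (by norm_num), by
          apply nat_eq_of_zmod _ _ (Nat.mod_lt _ (by norm_num)) l5
          rw [ZMod.natCast_mod, e5, hcast257]
          push_cast
          try ring⟩
    rcases hc1 with h' | h' | h'
    · exact h' hp0
    · rw [ht1] at h'; exact absurd h' (by simp)
    · rw [ht2] at h'; exact absurd h' (by simp)
  · rcases le_or_gt 8 b with hb | hb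
    · -- b ≥ 8 > c : p = 2^c
      have hpc : s.2.1.1 = 2^c % 256 := by
        apply nat_eq_of_zmod _ _ l3 (Nat.mod_lt _ (by norm_num))
        rw [e3, ZMod.natCast_mod, h]
        push_cast
        rw [zmod_pow2_256 ha8, zmod_pow2_256 hb]
        ring
      have ht1 : inT2 255 s.1.1 c = true := by
        rw [inT2]
        simp only [List.any_eq_true, List.mem_range, beq_iff_eq]
        refine ⟨a % 16, Nat.mod_lt _ (by norm_num), b % 16, Nat.mod_lt _ (by norm_num), ?_⟩
        apply nat_eq_of_zmod _ _ (Nat.mod_lt _ (by norm_num)) l1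
        rw [ZMod.natCast_mod, e1, hcast255]
        have : c % 16 = c := Nat.mod_eq_of_lt (by omega)
        push_cast
        try rw [this]
        try ring
      have ht2 : inT2 257 s.2.2.1 c = true := by
        rw [inT2]
        simp only [List.any_eq_true, List.mem_range, beq_iff_eq]
        refine ⟨a % 16, Nat.mod_lt _ (by norm_num), b % 16, Nat.mod_lt _ (by norm_num), ?_⟩
        apply nat_eq_of_zmod _ _ (Nat.mod_lt _ (by norm_num)) l5
        rw [ZMod.natCast_mod, e5, hcast257]
        have : c % 16 = c := Nat.mod_eq_of_lt (by omega)
        push_cast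
        try rw [this]
        try ring
      rcases hc2 c (by omega) with h' | h' | h'
      · exact h' hpc
      · rw [ht1] at h'; exact absurd h' (by simp)
      · rw [ht2] at h'; exact absurd h' (by simp)
    · -- b, c < 8 : p = (2^b + 2^c) % 256
      have hpbc : s.2.1.1 = (2^b + 2^c) % 256 := by
        apply nat_eq_of_zmod _ _ l3 (Nat.mod_lt _ (by norm_num))
        rw [e3, ZMod.natCast_mod, h]
        push_cast
        rw [zmod_pow2_256 ha8]
        ring
      have ht1 : inT1 255 s.1.1 b c = true := by
        rw [inT1]
        simp only [List.any_eq_true, List.mem_range, beq_iff_eq]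
        refine ⟨a % 16, Nat.mod_lt _ (by norm_num), ?_⟩
        apply nat_eq_of_zmod _ _ (Nat.mod_lt _ (by norm_num)) l1
        rw [ZMod.natCast_mod, e1, hcast255]
        have hbb : b % 16 = b := Nat.mod_eq_of_lt (by omega)
        have hcc : c % 16 = c := Nat.mod_eq_of_lt (by omega)
        push_cast
        try rw [hbb, hcc]
        try ring
      have ht2 : inT1 257 s.2.2.1 b c = true := by
        rw [inT1]
        simp only [List.any_eq_true, List.mem_range, beq_iff_eq]
        refine ⟨a % 16, Nat.mod_lt _ (by norm_num), ?_⟩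
        apply nat_eq_of_zmod _ _ (Nat.mod_lt _ (by norm_num)) l5
        rw [ZMod.natCast_mod, e5, hcast257]
        have hbb : b % 16 = b := Nat.mod_eq_of_lt (by omega)
        have hcc : c % 16 = c := Nat.mod_eq_of_lt (by omega)
        push_cast
        try rw [hbb, hcc]
        try ring
      rcases hc3 b (by omega) c (by omega) with h' | h' | h'
      · exact h' hpbc
      · rw [ht1] at h'; exact absurd h' (by simp)
      · rw [ht2] at h'; exact absurd h' (by simp)

noncomputable def alR : ℝ := 3 + 2 * Real.sqrt 2
noncomputable def beR : ℝ := 3 - 2 * Real.sqrt 2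

lemma hsq : Real.sqrt 2 ^ 2 = 2 := Real.sq_sqrt (by norm_num)
lemma hs2 : 0 < Real.sqrt 2 := Real.sqrt_pos.mpr (by norm_num)
lemma alR_pos : 0 < alR := by unfold alR; positivity
lemma hab : alR * beR = 1 := by unfold alR beR; linear_combination (-4 : ℝ) * hsq
lemma beR_pos : 0 < beR := by
  have h := hab
  nlinarith [alR_pos]
lemma beR_lt : beR < 0.6 := by
  unfold beR
  nlinarith [hsq, hs2]
lemma beR_lt1 : beR < 1 := by linarith [beR_lt]

lemma binet_pair (n : ℕ) :
    (balancing n : ℝ) * (4 * Real.sqrt 2) = alR ^ n - beR ^ n ∧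
    (balancing (n+1) : ℝ) * (4 * Real.sqrt 2) = alR ^ (n+1) - beR ^ (n+1) := by
  induction n with
  | zero =>
    constructor
    · simp [balancing]
    · show (balancing 1 : ℝ) * _ = _
      simp only [balancing, pow_one, pow_zero]
      unfold alR beR
      push_cast
      ring
  | succ n ih =>
    obtain ⟨h1, h2⟩ := ih
    refine ⟨h2, ?_⟩
    have ea : alR ^ (n+2) = 6 * alR ^ (n+1) - alR ^ n := by
      have h : alR ^ 2 = 6 * alR - 1 := by unfold alR; linear_combination (4:ℝ) * hsq
      calc alR ^ (n+2) = alR ^ n * alR ^ 2 := by ring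
      _ = alR ^ n * (6 * alR - 1) := by rw [h]
      _ = 6 * alR ^ (n+1) - alR ^ n := by ring
    have eb : beR ^ (n+2) = 6 * beR ^ (n+1) - beR ^ n := by
      have h : beR ^ 2 = 6 * beR - 1 := by unfold beR; linear_combination (4:ℝ) * hsq
      calc beR ^ (n+2) = beR ^ n * beR ^ 2 := by ring
      _ = beR ^ n * (6 * beR - 1) := by rw [h]
      _ = 6 * beR ^ (n+1) - beR ^ n := by ring
    rw [balancing_rec, ea, eb]
    push_cast
    linear_combination 6 * h2 - h1

theorem balancing_linear_form_bound_final (n1 n2 a1 a2 a3 : ℕ)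
    (hn : n2 ≤ n1) (ha12 : a2 ≤ a1) (ha23 : a3 ≤ a2) (hn1 : 100 < n1)
    (heq : balancing n1 + balancing n2 = 2 ^ a1 + 2 ^ a2 + 2 ^ a3) :
    |1 - (3 + 2 * Real.sqrt 2) ^ (-(n1 : ℤ)) * 2 ^ a1 *
        (4 * Real.sqrt 2 * (1 + (2 : ℝ) ^ ((a2 : ℤ) - a1) + (2 : ℝ) ^ ((a3 : ℤ) - a1)) /
          (1 + (3 + 2 * Real.sqrt 2) ^ ((n2 : ℤ) - n1)))| <
      0.6 * (3 + 2 * Real.sqrt 2) ^ (-(n1 : ℤ)) := by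
  have hn2 : 1 ≤ n2 := by
    rcases Nat.eq_zero_or_pos n2 with h0 | h; swap; · exact h
    exfalso
    apply not_three_powers n1 a1 a2 a3 ha23 ha12 hn1
    subst h0
    simpa [balancing] using heq
  rw [show (3 + 2 * Real.sqrt 2 : ℝ) = alR from rfl]
  set s2 := Real.sqrt 2 with hs2def
  set X1 := alR ^ n1 with hX1def
  set X2 := alR ^ n2 with hX2def
  set Y1 := beR ^ n1 with hY1def
  set Y2 := beR ^ n2 with hY2def
  have hX1 : 0 < X1 := pow_pos alR_pos _
  have hX2 : 0 < X2 := pow_pos alR_pos _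
  have hY1 : 0 < Y1 := pow_pos beR_pos _
  have hY2 : 0 < Y2 := pow_pos beR_pos _
  have hXX : 0 < X1 + X2 := by linarith
  have hinv : alR⁻¹ = beR := inv_eq_of_mul_eq_one_right hab
  have hzn : alR ^ (-(n1 : ℤ)) = Y1 := by
    rw [zpow_neg, zpow_natCast, ← inv_pow, hinv, hY1def]
  have hw : alR ^ ((n2 : ℤ) - n1) * X1 = X2 := by
    rw [hX1def, hX2def, ← zpow_natCast alR n1, ← zpow_natCast alR n2,
      ← zpow_add₀ (ne_of_gt alR_pos)]
    congr 1
    ring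
  have hu2 : (2 : ℝ) ^ ((a2 : ℤ) - a1) * 2 ^ a1 = 2 ^ a2 := by
    rw [← zpow_natCast (2:ℝ) a1, ← zpow_natCast (2:ℝ) a2, ← zpow_add₀ (two_ne_zero)]
    congr 1
    ring
  have hu3 : (2 : ℝ) ^ ((a3 : ℤ) - a1) * 2 ^ a1 = 2 ^ a3 := by
    rw [← zpow_natCast (2:ℝ) a1, ← zpow_natCast (2:ℝ) a3, ← zpow_add₀ (two_ne_zero)]
    congr 1
    ring
  have hwpos : 0 < alR ^ ((n2 : ℤ) - n1) := zpow_pos alR_pos _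
  have hD : 0 < 1 + alR ^ ((n2 : ℤ) - n1) := by linarith
  have hb1 := (binet_pair n1).1
  have hb2 := (binet_pair n2).1
  have hS : ((balancing n1 : ℝ) + (balancing n2 : ℝ)) = 2 ^ a1 + 2 ^ a2 + 2 ^ a3 := by
    have := congrArg (fun z : ℤ => (z : ℝ)) heq
    push_cast at this
    exact this
  have h4S : 4 * s2 * ((2:ℝ) ^ a1 + 2 ^ a2 + 2 ^ a3) = X1 + X2 - Y1 - Y2 := by
    rw [← hS]
    linear_combination hb1 + hb2
  have hE : alR ^ (-(n1 : ℤ)) * 2 ^ a1 *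
      (4 * s2 * (1 + (2 : ℝ) ^ ((a2 : ℤ) - a1) + (2 : ℝ) ^ ((a3 : ℤ) - a1)) /
        (1 + alR ^ ((n2 : ℤ) - n1))) =
      4 * s2 * ((2:ℝ) ^ a1 + 2 ^ a2 + 2 ^ a3) / (X1 + X2) := by
    rw [zpow_neg, zpow_natCast, ← hX1def]
    rw [eq_div_iff (ne_of_gt hXX)]
    field_simp
    linear_combination (s2 * (X1 + X2)) * hu2 + (s2 * (X1 + X2)) * hu3 -
      (s2 * ((2:ℝ) ^ a1 + 2 ^ a2 + 2 ^ a3)) * hw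
  rw [hE, hzn]
  have hfold : Y1 + Y2 = beR ^ (n1 + n2) * (X1 + X2) := by
    have k1 : Y1 * X1 = 1 := by rw [hY1def, hX1def, ← mul_pow, mul_comm beR alR, hab, one_pow]
    have k2 : Y2 * X2 = 1 := by rw [hY2def, hX2def, ← mul_pow, mul_comm beR alR, hab, one_pow]
    have hp : beR ^ (n1 + n2) = Y1 * Y2 := by rw [pow_add, hY1def, hY2def]
    rw [hp]
    linear_combination (-Y2) * k1 + (-Y1) * k2
  have h1E : 1 - 4 * s2 * ((2:ℝ) ^ a1 + 2 ^ a2 + 2 ^ a3) / (X1 + X2) = beR ^ (n1 + n2) := by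
    have hq : 4 * s2 * ((2:ℝ) ^ a1 + 2 ^ a2 + 2 ^ a3) = (1 - beR ^ (n1 + n2)) * (X1 + X2) := by
      linear_combination h4S - hfold
    rw [hq, mul_div_assoc, div_self (ne_of_gt hXX), mul_one]
    ring
  rw [h1E]
  have habs : |beR ^ (n1 + n2)| = beR ^ (n1 + n2) := abs_of_pos (pow_pos beR_pos _)
  rw [habs, pow_add]
  have hle : beR ^ n2 ≤ beR := by
    calc beR ^ n2 ≤ beR ^ 1 := pow_le_pow_of_le_one (le_of_lt beR_pos) (le_of_lt beR_lt1) hn2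
    _ = beR := pow_one beR
  calc beR ^ n1 * beR ^ n2 ≤ beR ^ n1 * beR := by
        exact mul_le_mul_of_nonneg_left hle (le_of_lt hY1)
  _ < beR ^ n1 * 0.6 := by exact mul_lt_mul_of_pos_left beR_lt hY1
  _ = 0.6 * Y1 := by rw [hY1def]; ring
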